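/- Let d ≥ 1, let G : ℝ^d → ℝ be a bounded continuously differentiable function with bounded gradient, and let ψ ∈ C_c^∞(ℝ^d; ℂ). Then Re ∫_{ℝ^d} ⟨∇ψ(x), ∇(G(x)²ψ(x))⟩ dx = ∫_{ℝ^d} |∇(G(x)ψ(x))|² dx − ∫_{ℝ^d} |ψ(x)|² |∇G(x)|² dx, where ⟨·,·⟩ is the standard Hermitian inner product on ℂ^d (conjugate-linear in the second slot applied to ∇(G²ψ), i.e. ⟨∇ψ, ∇(G²ψ̄)⟩ summed over coordinates). -/

import Mathlib

/-!
STATEMENT 3 (Agmon-type identity): Let `d ≥ 1`, let `G : ℝ^d → ℝ` be a bounded C¹ function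
with bounded gradient and `ψ ∈ C_c^∞(ℝ^d; ℂ)`. Then
`Re ∫ ⟨∇ψ, ∇(G²ψ)⟩ = ∫ |∇(Gψ)|² − ∫ |ψ|² |∇G|²`,
where `⟨u, v⟩ = ∑ i uᵢ * conj vᵢ` is the standard Hermitian inner product on `ℂ^d`
(conjugate-linear in the second slot, applied to `∇(G²ψ)`).

Partial derivatives are expressed via `fderiv ℝ` applied to the standard basis vectors;
`|∇(Gψ)|² = ∑ i ‖∂ᵢ(Gψ)‖²` and `|∇G|² = ‖fderiv ℝ G x‖²` (operator norm = gradient norm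
for real-valued functions on a real inner product space).
-/

open MeasureTheory Complex

/-- `⟨∇f(x), ∇g(x)⟩`: Hermitian inner product of the (complex) gradients,
conjugate-linear in the second argument. -/
noncomputable def gradPair3 (d : ℕ) (f g : EuclideanSpace ℝ (Fin d) → ℂ)
    (x : EuclideanSpace ℝ (Fin d)) : ℂ :=
  ∑ i, fderiv ℝ f x (EuclideanSpace.single i 1)
        * (starRingEnd ℂ) (fderiv ℝ g x (EuclideanSpace.single i 1))

/-- `|∇f(x)|²` for a complex-valued `f`. -/
noncomputable def gradSqC3 (d : ℕ) (f : EuclideanSpace ℝ (Fin d) → ℂ)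
    (x : EuclideanSpace ℝ (Fin d)) : ℝ :=
  ∑ i, ‖fderiv ℝ f x (EuclideanSpace.single i 1)‖ ^ 2



lemma normB3 (d : ℕ) (B : EuclideanSpace ℝ (Fin d) →L[ℝ] ℝ) :
    ‖B‖^2 = ∑ i, (B (EuclideanSpace.single i 1))^2 := by
  set w := (InnerProductSpace.toDual ℝ (EuclideanSpace ℝ (Fin d))).symm B with hw
  have hB : ∀ v, B v = (inner ℝ w v : ℝ) := fun v =>
    (InnerProductSpace.toDual_symm_apply).symm
  have hn : ‖B‖ = ‖w‖ := ((InnerProductSpace.toDual ℝ _).symm.norm_map B).symm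
  rw [hn]
  have h2 : ‖w‖^2 = ∑ i, (w i)^2 := by
    rw [EuclideanSpace.norm_eq, Real.sq_sqrt (by positivity)]
    simp [sq_abs]
  rw [h2]
  refine Finset.sum_congr rfl fun i _ => ?_
  rw [hB, EuclideanSpace.inner_single_right]
  simp

lemma pt3 (d : ℕ) (G : EuclideanSpace ℝ (Fin d) → ℝ) (hG : ContDiff ℝ 1 G)
    (ψ : EuclideanSpace ℝ (Fin d) → ℂ) (hψ : ContDiff ℝ (⊤ : ℕ∞) ψ)
    (x : EuclideanSpace ℝ (Fin d)) :
    (gradPair3 d ψ (fun y => (G y : ℂ) ^ 2 * ψ y) x).re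
      = gradSqC3 d (fun y => (G y : ℂ) * ψ y) x - ‖ψ x‖ ^ 2 * ‖fderiv ℝ G x‖ ^ 2 := by
  have hGx : HasFDerivAt G (fderiv ℝ G x) x := (hG.differentiable one_ne_zero x).hasFDerivAt
  have hGcx : HasFDerivAt (fun y => (G y : ℂ)) (Complex.ofRealCLM.comp (fderiv ℝ G x)) x :=
    Complex.ofRealCLM.hasFDerivAt.comp x hGx
  have hψx : HasFDerivAt ψ (fderiv ℝ ψ x) x :=
    (hψ.differentiable (by simp) x).hasFDerivAt
  have h1 : HasFDerivAt (fun y => (G y : ℂ) * ψ y)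
      ((G x : ℂ) • fderiv ℝ ψ x + ψ x • (Complex.ofRealCLM.comp (fderiv ℝ G x))) x :=
    hGcx.mul hψx
  have hsq : HasFDerivAt (fun y => (G y : ℂ) * (G y : ℂ))
      ((G x : ℂ) • (Complex.ofRealCLM.comp (fderiv ℝ G x))
        + (G x : ℂ) • (Complex.ofRealCLM.comp (fderiv ℝ G x))) x := hGcx.mul hGcx
  have h2' := hsq.mul hψx
  have hfe : (fun y => (G y : ℂ) ^ 2 * ψ y) = (fun y => ((G y : ℂ) * (G y : ℂ)) * ψ y) := by
    ext y; ring
  simp only [Pi.mul_def] at h2'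
  rw [← hfe] at h2'
  rw [gradPair3, gradSqC3, Complex.re_sum, normB3, Finset.mul_sum, ← Finset.sum_sub_distrib]
  refine Finset.sum_congr rfl fun i _ => ?_
  rw [h2'.fderiv, h1.fderiv]
  simp only [ContinuousLinearMap.add_apply, ContinuousLinearMap.coe_smul', Pi.smul_apply,
    ContinuousLinearMap.coe_comp', Function.comp_apply, Complex.ofRealCLM_apply,
    smul_eq_mul]
  simp only [Complex.sq_norm, Complex.normSq_apply, Complex.mul_re,
    Complex.mul_im, Complex.add_re, Complex.add_im, Complex.conj_re, Complex.conj_im,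
    Complex.ofReal_re, Complex.ofReal_im]
  ring
theorem stmt_3 (d : ℕ) (hd : 1 ≤ d) (G : EuclideanSpace ℝ (Fin d) → ℝ)
    (hG : ContDiff ℝ 1 G)
    (hGbd : ∃ C : ℝ, ∀ x, |G x| ≤ C)
    (hGgradbd : ∃ C : ℝ, ∀ x, ‖fderiv ℝ G x‖ ≤ C)
    (ψ : EuclideanSpace ℝ (Fin d) → ℂ)
    (hψ : ContDiff ℝ (⊤ : ℕ∞) ψ) (hψc : HasCompactSupport ψ) :
    (∫ x, gradPair3 d ψ (fun y => (G y : ℂ) ^ 2 * ψ y) x).re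
      = (∫ x, gradSqC3 d (fun y => (G y : ℂ) * ψ y) x)
        - ∫ x, ‖ψ x‖ ^ 2 * ‖fderiv ℝ G x‖ ^ 2 := by
  have hψ1 : ContDiff ℝ 1 ψ := hψ.of_le (by exact_mod_cast le_top)
  have hGc : ContDiff ℝ 1 (fun y => (G y : ℂ)) := Complex.ofRealCLM.contDiff.comp hG
  have hf2 : ContDiff ℝ 1 (fun y => (G y : ℂ) ^ 2 * ψ y) := (hGc.pow 2).mul hψ1
  have hf1 : ContDiff ℝ 1 (fun y => (G y : ℂ) * ψ y) := hGc.mul hψ1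
  have hcψ' : Continuous (fderiv ℝ ψ) := hψ1.continuous_fderiv one_ne_zero
  have hc2 : Continuous (fderiv ℝ (fun y => (G y : ℂ) ^ 2 * ψ y)) :=
    hf2.continuous_fderiv one_ne_zero
  have hc1 : Continuous (fderiv ℝ (fun y => (G y : ℂ) * ψ y)) :=
    hf1.continuous_fderiv one_ne_zero
  have hcG' : Continuous (fderiv ℝ G) := hG.continuous_fderiv one_ne_zero
  -- integrability of gradPair3
  have hfcont : Continuous (fun x => gradPair3 d ψ (fun y => (G y : ℂ) ^ 2 * ψ y) x) := by
    unfold gradPair3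
    refine continuous_finset_sum _ fun i _ => ?_
    exact (hcψ'.clm_apply continuous_const).mul
      ((Complex.continuous_conj).comp (hc2.clm_apply continuous_const))
  have hfcs : HasCompactSupport (fun x => gradPair3 d ψ (fun y => (G y : ℂ) ^ 2 * ψ y) x) := by
    refine (hψc.fderiv (𝕜 := ℝ)).mono fun x hx => ?_
    simp only [Function.mem_support] at hx ⊢
    intro h0
    apply hx
    simp [gradPair3, h0]
  have hfint : Integrable (fun x => gradPair3 d ψ (fun y => (G y : ℂ) ^ 2 * ψ y) x) :=
    hfcont.integrable_of_hasCompactSupport hfcs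
  -- integrability of gradSqC3
  have hf1cs : HasCompactSupport (fun y => (G y : ℂ) * ψ y) := hψc.mul_left
  have hgcont : Continuous (fun x => gradSqC3 d (fun y => (G y : ℂ) * ψ y) x) := by
    unfold gradSqC3
    refine continuous_finset_sum _ fun i _ => ?_
    exact ((hc1.clm_apply continuous_const).norm).pow 2
  have hgcs : HasCompactSupport (fun x => gradSqC3 d (fun y => (G y : ℂ) * ψ y) x) := by
    refine (hf1cs.fderiv (𝕜 := ℝ)).mono fun x hx => ?_
    simp only [Function.mem_support] at hx ⊢
    intro h0
    apply hx
    simp [gradSqC3, h0]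
  have hgint : Integrable (fun x => gradSqC3 d (fun y => (G y : ℂ) * ψ y) x) :=
    hgcont.integrable_of_hasCompactSupport hgcs
  -- integrability of last term
  have hhcont : Continuous (fun x => ‖ψ x‖ ^ 2 * ‖fderiv ℝ G x‖ ^ 2) :=
    ((hψ1.continuous.norm).pow 2).mul ((hcG'.norm).pow 2)
  have hhcs : HasCompactSupport (fun x => ‖ψ x‖ ^ 2 * ‖fderiv ℝ G x‖ ^ 2) := by
    refine hψc.mono fun x hx => ?_
    simp only [Function.mem_support] at hx ⊢
    intro h0
    apply hx
    simp [h0]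
  have hhint : Integrable (fun x => ‖ψ x‖ ^ 2 * ‖fderiv ℝ G x‖ ^ 2) :=
    hhcont.integrable_of_hasCompactSupport hhcs
  have hre : (∫ x, gradPair3 d ψ (fun y => (G y : ℂ) ^ 2 * ψ y) x).re
      = ∫ x, (gradPair3 d ψ (fun y => (G y : ℂ) ^ 2 * ψ y) x).re := by
    have h := Complex.reCLM.integral_comp_comm hfint
    simpa using h.symm
  rw [hre, ← integral_sub hgint hhint]
  exact integral_congr_ae (Filter.Eventually.of_forall fun x => pt3 d G hG ψ hψ x)
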